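/- For real r, s > 0 with s ≠ r√2, the polynomial h = r·z(2z² − 3x² − 3y²) + s·(x³ − 3xy²) has no linear factor; i.e., h is not divisible by any nonzero linear form on ℝ³. -/
import Mathlib


open MvPolynomial

/-- For r, s > 0 with s ≠ r√2, the cubic r·z(2z²−3x²−3y²) + s·(x³−3xy²) has no
real linear factor. -/
theorem no_linear_factor (r s : ℝ) (hr : 0 < r) (hs : 0 < s)
    (hrs : s ≠ r * Real.sqrt 2) :
    ∀ a b c : ℝ, (a ≠ 0 ∨ b ≠ 0 ∨ c ≠ 0) →
      ¬ ((C a * X 0 + C b * X 1 + C c * X 2) ∣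
          (C r * (X 2 * (2 * X 2 ^ 2 - 3 * X 0 ^ 2 - 3 * X 1 ^ 2)) +
            C s * (X 0 ^ 3 - 3 * X 0 * X 1 ^ 2) : MvPolynomial (Fin 3) ℝ)) := by
  intro a b c habc hdvd
  obtain ⟨q, hq⟩ := hdvd
  have key : ∀ x y z : ℝ, a*x + b*y + c*z = 0 →
      r * (z * (2*z^2 - 3*x^2 - 3*y^2)) + s * (x^3 - 3*x*y^2) = 0 := by
    intro x y z h0
    have h2 := congrArg (eval (![x, y, z] : Fin 3 → ℝ)) hq
    simp only [map_add, map_mul, map_sub, map_pow, eval_C, eval_X, map_ofNat,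
      Matrix.cons_val_zero, Matrix.cons_val_one, Matrix.head_cons,
      Matrix.cons_val_two, Matrix.tail_cons] at h2
    rw [show a * x + b * y + c * z = 0 from h0] at h2
    · linarith [h2]
  -- four coefficient equations
  have hA : -2*r*a^3 + 3*r*a*c^2 + s*c^3 = 0 := by
    have h := key c 0 (-a) (by ring)
    nlinarith [h]
  have hD : -2*r*b^3 + 3*r*b*c^2 = 0 := by
    have h := key 0 c (-b) (by ring)
    nlinarith [h]
  have h3 : -2*r*(a+b)^3 + 6*r*(a+b)*c^2 - 2*s*c^3 = 0 := by
    have h := key c c (-(a+b)) (by ring)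
    nlinarith [h]
  have h4 : -2*r*(2*a+b)^3 + 15*r*(2*a+b)*c^2 + 2*s*c^3 = 0 := by
    have h := key (2*c) c (-(2*a+b)) (by ring)
    nlinarith [h]
  have hB : 3*r*b*(c^2 - 2*a^2) = 0 := by linear_combination (h4 - 2*h3 - 6*hA + hD)/2
  have hC : 3*r*a*c^2 - 6*r*a*b^2 - 3*s*c^3 = 0 := by linear_combination h3 - hA - hD - hB
  -- derive s^2 = 2 r^2
  have hs2 : s^2 = 2*r^2 := by
    by_cases hb : b = 0
    · subst hb
      by_cases hc : c = 0
      · subst hc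
        have ha : a = 0 := by
          have h5 : r * a^3 = 0 := by linarith [hA]
          rcases mul_eq_zero.mp h5 with h | h
          · exact absurd h hr.ne'
          · exact pow_eq_zero_iff (by norm_num) |>.mp h
        rcases habc with h | h | h <;> simp_all
      · have hc2 : c^2 ≠ 0 := pow_ne_zero _ hc
        have hac : r*a = s*c := by
          apply mul_right_cancel₀ hc2
          linear_combination hC / 3
        have ha : a ≠ 0 := by
          intro h
          rw [h, mul_zero] at hac
          rcases mul_eq_zero.mp hac.symm with h' | h'
          · exact hs.ne' h'
          · exact hc h'
        have ha2 : a^2 = 2*c^2 := by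
          have h5 : (r*a) * (2*c^2 - a^2) = 0 := by linear_combination hA/2 + (c:ℝ)^2*hac/2
          rcases mul_eq_zero.mp h5 with h | h
          · exact absurd h (mul_ne_zero hr.ne' ha)
          · linarith
        apply mul_right_cancel₀ hc2
        linear_combination (-(s*c+r*a))*hac + r^2*ha2
    · have hbc : 2*b^2 = 3*c^2 := by
        have h5 : r*b*(3*c^2 - 2*b^2) = 0 := by linear_combination hD
        rcases mul_eq_zero.mp h5 with h | h
        · rcases mul_eq_zero.mp h with h | h
          · exact absurd h hr.ne'
          · exact absurd h hb
        · linarith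
      have hc : c ≠ 0 := by
        intro h; rw [h] at hbc; simp at hbc
        exact hb (by nlinarith [hbc])
      have hca : c^2 = 2*a^2 := by
        have h5 : c^2 - 2*a^2 = 0 := by
          rcases mul_eq_zero.mp hB with h | h
          · rcases mul_eq_zero.mp h with h | h
            · nlinarith
            · exact absurd h hb
          · exact h
        linarith
      have hac : -2*r*a = s*c := by
        have : -6*r*a*c^2 = 3*s*c^3 := by linear_combination hC + 3*r*a*hbc
        have hc2 : (c:ℝ)^2 ≠ 0 := pow_ne_zero _ hc
        have := mul_right_cancel₀ hc2 (show (-2*r*a) * c^2 = (s*c) * c^2 by linear_combination this/3)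
        exact this
      have : s^2*c^2 = 2*r^2*c^2 := by linear_combination (2*r*a - s*c)*hac - 2*r^2*hca
      have hc2 : c^2 ≠ 0 := pow_ne_zero _ hc
      exact mul_right_cancel₀ hc2 this
  -- conclude s = r√2, contradiction
  apply hrs
  have hsq : s^2 = (r * Real.sqrt 2)^2 := by
    rw [mul_pow, Real.sq_sqrt (by norm_num : (0:ℝ) ≤ 2)]
    linarith
  have hpos : 0 < r * Real.sqrt 2 := mul_pos hr (Real.sqrt_pos.mpr (by norm_num))
  have h0 : (s - r*Real.sqrt 2)*(s + r*Real.sqrt 2) = 0 := by linear_combination hsq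
  rcases mul_eq_zero.mp h0 with h | h
  · linarith
  · linarith
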